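/- Let N be even, let p_1 ≥ ⋯ ≥ p_N ≥ 0 be a sorted probability distribution, let 0 ≤ p ≤ 1/2, and let A ⊆ {1,…,N} be any C-partition (for every i ∈ {1,…,N/2} exactly one of 2i−1, 2i belongs to A). Then the zigzag cut is at least as large: CUT_ZZ(G_X) ≥ CUT_A(G_X). -/

import Mathlib

open Finset

noncomputable def guess (N : ℕ) (q : Fin N → ℝ) : ℝ :=
  Finset.univ.inf' ⟨1, Finset.mem_univ 1⟩
    (fun σ : Equiv.Perm (Fin N) => ∑ k : Fin N, ((k : ℝ) + 1) * q (σ k))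

noncomputable def guessA (N : ℕ) (q : Fin N → ℝ) (p : ℝ) (A : Finset (Fin N)) : ℝ :=
  ∑ y : Bool, Finset.univ.inf' ⟨1, Finset.mem_univ 1⟩
    (fun σ : Equiv.Perm (Fin N) => ∑ k : Fin N,
      ((k : ℝ) + 1) * q (σ k) * (if ((σ k ∈ A) ↔ (y = true)) then 1 - p else p))

noncomputable def guessOpt (N : ℕ) (q : Fin N → ℝ) (p : ℝ) : ℝ :=
  Finset.univ.inf' ⟨∅, Finset.mem_univ ∅⟩ (fun A : Finset (Fin N) => guessA N q p A)

def zigzag (N : ℕ) : Finset (Fin N) := Finset.univ.filter (fun k => (k : ℕ) % 2 = 0)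

noncomputable def wt (N : ℕ) (q : Fin N → ℝ) (p : ℝ) (i j : Fin N) : ℝ :=
  max 0 ((1 - p) * min (q i) (q j) - p * max (q i) (q j))

noncomputable def cut (N : ℕ) (q : Fin N → ℝ) (p : ℝ) (A : Finset (Fin N)) : ℝ :=
  ∑ i ∈ A, ∑ j ∈ Aᶜ, wt N q p i j

noncomputable def maxcut (N : ℕ) (q : Fin N → ℝ) (p : ℝ) : ℝ :=
  Finset.univ.sup' ⟨∅, Finset.mem_univ ∅⟩ (fun A : Finset (Fin N) => cut N q p A)

lemma wt_symm (N : ℕ) (q : Fin N → ℝ) (p : ℝ) (i j : Fin N) :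
    wt N q p i j = wt N q p j i := by
  unfold wt
  rw [min_comm, max_comm (q i)]

lemma key_real (p a b c d : ℝ) (hp0 : 0 ≤ p) (hp1 : p ≤ 1)
    (hab : b ≤ a) (hdc : d ≤ c) :
    max 0 ((1-p)*c - p*a) + max 0 ((1-p)*d - p*b)
      ≤ max 0 ((1-p)*d - p*a) + max 0 ((1-p)*c - p*b) := by
  have h1 : p*b ≤ p*a := mul_le_mul_of_nonneg_left hab hp0
  have h2 : (1-p)*d ≤ (1-p)*c := mul_le_mul_of_nonneg_left hdc (by linarith)
  simp only [max_def]
  split_ifs <;> linarith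

theorem stmt_18 (N : ℕ) (hN : 1 ≤ N) (hNe : Even N) (q : Fin N → ℝ)
    (hnn : ∀ i, 0 ≤ q i) (hsum : ∑ i, q i = 1)
    (hsort : ∀ i j : Fin N, i ≤ j → q j ≤ q i)
    (p : ℝ) (hp0 : 0 ≤ p) (hp : p ≤ 1 / 2)
    (A : Finset (Fin N))
    (hA : ∀ i : ℕ, ∀ h1 : 2 * i < N, ∀ h2 : 2 * i + 1 < N,
      ((⟨2 * i, h1⟩ : Fin N) ∈ A ↔ (⟨2 * i + 1, h2⟩ : Fin N) ∉ A)) :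
    cut N q p A ≤ cut N q p (zigzag N) := by
  classical
  obtain ⟨M, hMN⟩ := hNe
  have hM : 2 * M = N := by omega
  set e : Fin M → Bool → Fin N := fun b r =>
    ⟨2 * b.val + (if r then 1 else 0), by
      have := b.isLt
      cases r <;> simp <;> omega⟩ with he_def
  have heval : ∀ (b : Fin M) (r : Bool),
      (e b r).val = 2 * b.val + (if r then 1 else 0) := fun b r => rfl
  -- generic decomposition lemma
  have decomp : ∀ (S : Finset (Fin N)) (u : Fin M → Bool),
      (∀ b, e b (u b) ∈ S) → (∀ b, e b (!u b) ∉ S) →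
      ∀ f : Fin N → ℝ, ∑ i ∈ S, f i = ∑ b : Fin M, f (e b (u b)) := by
    intro S u hin hout f
    refine (Finset.sum_nbij' (i := fun b : Fin M => e b (u b))
      (j := fun a : Fin N => (⟨a.val / 2, by have := a.isLt; omega⟩ : Fin M))
      (fun b _ => hin b) (fun a _ => Finset.mem_univ _) ?_ ?_
      (fun b _ => rfl)).symm
    · intro b _
      apply Fin.ext
      simp only [heval]
      cases u b <;> simp <;> omega
    · intro a ha
      set b : Fin M := ⟨a.val / 2, by have := a.isLt; omega⟩ with hb
      have hval : ∀ r : Bool, (e b r).val = 2 * (a.val / 2) + (if r then 1 else 0) := by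
        intro r; rw [heval]
      rcases Nat.mod_two_eq_zero_or_one a.val with h2 | h2
      · have hfa : e b false = a := by
          apply Fin.ext; rw [hval]; simp; omega
        have hu : u b = false := by
          by_contra h
          have h' : u b = true := by
            cases hub : u b
            · exact absurd hub h
            · rfl
          have : e b (!u b) = a := by rw [h']; exact hfa
          exact hout b (this ▸ ha)
        show e b (u b) = a
        rw [hu]; exact hfa
      · have hta : e b true = a := by
          apply Fin.ext; rw [hval]; simp; omega
        have hu : u b = true := by
          by_contra h
          have h' : u b = false := by
            cases hub : u b
            · rfl
            · exact absurd hub h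
          have : e b (!u b) = a := by rw [h']; exact hta
          exact hout b (this ▸ ha)
        show e b (u b) = a
        rw [hu]; exact hta
  -- the C-partition structure of A
  have hAiff : ∀ b : Fin M, (e b false ∈ A) ↔ (e b true ∉ A) := by
    intro b
    have h1 : 2 * b.val < N := by have := b.isLt; omega
    have h2 : 2 * b.val + 1 < N := by have := b.isLt; omega
    have ef : e b false = ⟨2 * b.val, h1⟩ := by apply Fin.ext; rw [heval]; simp
    have et : e b true = ⟨2 * b.val + 1, h2⟩ := by apply Fin.ext; rw [heval]; simp
    rw [ef, et]
    exact hA b.val h1 h2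
  set t : Fin M → Bool := fun b => decide (e b true ∈ A) with ht
  have htt : ∀ b, t b = true ↔ e b true ∈ A := by intro b; simp [ht]
  have hAin : ∀ b, e b (t b) ∈ A := by
    intro b
    by_cases h : e b true ∈ A
    · have : t b = true := (htt b).mpr h
      rw [this]; exact h
    · have : t b = false := by
        cases hb : t b
        · rfl
        · exact absurd ((htt b).mp hb) h
      rw [this]; exact (hAiff b).mpr h
  have hAout : ∀ b, e b (!t b) ∉ A := by
    intro b
    by_cases h : e b true ∈ A
    · have : t b = true := (htt b).mpr h
      rw [this]
      simp only [Bool.not_true]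
      intro hf
      exact (hAiff b).mp hf h
    · have : t b = false := by
        cases hb : t b
        · rfl
        · exact absurd ((htt b).mp hb) h
      rw [this]
      simpa using h
  -- zigzag structure
  have hZin : ∀ b : Fin M, e b false ∈ zigzag N := by
    intro b
    simp only [zigzag, Finset.mem_filter, Finset.mem_univ, true_and]
    norm_num
    simp only [heval, Bool.false_eq_true, ↓reduceIte]
    omega
  have hZout : ∀ b : Fin M, e b true ∉ zigzag N := by
    intro b
    simp only [zigzag, Finset.mem_filter, Finset.mem_univ, true_and]
    norm_num
    simp only [heval, Bool.false_eq_true, ↓reduceIte]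
    omega
  -- express both cuts as double sums over blocks
  have hcutA : cut N q p A
      = ∑ b : Fin M, ∑ c : Fin M, wt N q p (e b (t b)) (e c (!t c)) := by
    unfold cut
    rw [decomp A t hAin hAout]
    refine Finset.sum_congr rfl fun b _ => ?_
    exact decomp Aᶜ (fun c => !t c)
      (fun c => Finset.mem_compl.mpr (hAout c))
      (fun c => by simpa [Bool.not_not, Finset.mem_compl] using hAin c) _
  have hcutZ : cut N q p (zigzag N)
      = ∑ b : Fin M, ∑ c : Fin M, wt N q p (e b false) (e c true) := by
    unfold cut
    rw [decomp (zigzag N) (fun _ => false) hZin (fun b => by simpa using hZout b)]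
    refine Finset.sum_congr rfl fun b _ => ?_
    exact decomp (zigzag N)ᶜ (fun _ => true)
      (fun c => Finset.mem_compl.mpr (hZout c))
      (fun c => by simpa [Finset.mem_compl] using hZin c) _
  rw [hcutA, hcutZ]
  -- pointwise order on sorted wt
  have wtle : ∀ i j : Fin N, i ≤ j → wt N q p i j = max 0 ((1-p) * q j - p * q i) := by
    intro i j hij
    have hq := hsort i j hij
    unfold wt
    rw [min_eq_right hq, max_eq_left hq]
  -- core cross inequality for distinct blocks
  have core : ∀ b c : Fin M, b.val < c.val →
      wt N q p (e b false) (e c false) + wt N q p (e b true) (e c true)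
        ≤ wt N q p (e b false) (e c true) + wt N q p (e b true) (e c false) := by
    intro b c hbc
    have l13 : e b false ≤ e c false := by
      rw [Fin.le_def, heval, heval]; simp; omega
    have l24 : e b true ≤ e c true := by
      rw [Fin.le_def, heval, heval]; simp; omega
    have l14 : e b false ≤ e c true := by
      rw [Fin.le_def, heval, heval]; simp; omega
    have l23 : e b true ≤ e c false := by
      rw [Fin.le_def, heval, heval]; simp; omega
    have l12 : e b false ≤ e b true := by
      rw [Fin.le_def, heval, heval]; simp
    have l34 : e c false ≤ e c true := by
      rw [Fin.le_def, heval, heval]; simp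
    rw [wtle _ _ l13, wtle _ _ l24, wtle _ _ l14, wtle _ _ l23]
    exact key_real p (q (e b false)) (q (e b true)) (q (e c false)) (q (e c true))
      hp0 (by linarith) (hsort _ _ l12) (hsort _ _ l34)
  -- symmetric version for arbitrary distinct blocks
  have core' : ∀ b c : Fin M, b ≠ c →
      wt N q p (e b false) (e c false) + wt N q p (e b true) (e c true)
        ≤ wt N q p (e b false) (e c true) + wt N q p (e c false) (e b true) := by
    intro b c hne
    rcases lt_or_gt_of_ne (fun h : b.val = c.val => hne (Fin.ext h)) with h | h
    · have := core b c h
      have s1 := wt_symm N q p (e b true) (e c false)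
      linarith
    · have := core c b h
      have s1 := wt_symm N q p (e c false) (e b false)
      have s2 := wt_symm N q p (e c true) (e b true)
      have s3 := wt_symm N q p (e c false) (e b true)
      have s4 := wt_symm N q p (e c true) (e b false)
      linarith
  -- pairing argument
  have pair : ∀ F G : Fin M → Fin M → ℝ,
      (∀ b c, F b c + F c b ≤ G b c + G c b) →
      (∑ b : Fin M, ∑ c : Fin M, F b c) ≤ ∑ b : Fin M, ∑ c : Fin M, G b c := by
    intro F G h
    have hsum2 : ∑ b : Fin M, ∑ c : Fin M, (F b c + F c b)
        ≤ ∑ b : Fin M, ∑ c : Fin M, (G b c + G c b) :=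
      Finset.sum_le_sum fun b _ => Finset.sum_le_sum fun c _ => h b c
    have eF : ∑ b : Fin M, ∑ c : Fin M, F c b = ∑ b : Fin M, ∑ c : Fin M, F b c :=
      Finset.sum_comm
    have eG : ∑ b : Fin M, ∑ c : Fin M, G c b = ∑ b : Fin M, ∑ c : Fin M, G b c :=
      Finset.sum_comm
    simp only [Finset.sum_add_distrib] at hsum2
    linarith
  apply pair
  intro b c
  by_cases hbc : t b = t c
  · -- same choice: equality
    cases h : t c
    · rw [hbc, h]
      simp only [Bool.not_false]
      exact le_refl _
    · rw [hbc, h]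
      simp only [Bool.not_true]
      have s1 := wt_symm N q p (e b true) (e c false)
      have s2 := wt_symm N q p (e c true) (e b false)
      linarith
  · -- opposite choices
    have hne : b ≠ c := fun h => hbc (by rw [h])
    have main := core' b c hne
    cases hb : t b <;> cases hc : t c
    · exact absurd (hb.trans hc.symm) hbc
    · simp only [hb, hc, Bool.not_true, Bool.not_false]
      have s1 := wt_symm N q p (e c true) (e b true)
      linarith
    · simp only [hb, hc, Bool.not_true, Bool.not_false]
      have s1 := wt_symm N q p (e b true) (e c true)
      have s2 := wt_symm N q p (e c false) (e b false)
      have s3 := wt_symm N q p (e b false) (e c true)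
      have s4 := wt_symm N q p (e c false) (e b true)
      linarith
    · exact absurd (hb.trans hc.symm) hbc
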